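/- Let β be a type, T : β → β → Prop a transition relation and R : Set β. For P : Set β define the monotone operator Φ_P : Set β → Set β by Φ_P Y = {x | (x ∈ R ∧ ∃ y, T x y ∧ y ∈ P) ∨ (∃ y, T x y ∧ y ∈ Y)}, and define the monotone operator Ψ : Set β → Set β by Ψ P = lfp Φ_P. Then for every x : β, x ∈ gfp Ψ if and only if there exists an infinite path p : ℕ → β with p 0 = x, T (p n) (p (n+1)) for all n, and for every n there exists m ≥ n with p m ∈ R; i.e., x has an infinite path passing infinitely often through a state satisfying R. -/

import Mathlib

/-- The inner operator `Φ_P Y = {x | (x ∈ R ∧ ∃ y, T x y ∧ y ∈ P) ∨ (∃ y, T x y ∧ y ∈ Y)}`,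
bundled with its monotonicity. -/
def PhiHom {β : Type*} (T : β → β → Prop) (R P : Set β) : Set β →o Set β :=
  ⟨fun Y => {x | (x ∈ R ∧ ∃ y, T x y ∧ y ∈ P) ∨ (∃ y, T x y ∧ y ∈ Y)},
   fun _Y _Z hYZ _x hx => hx.imp id (fun ⟨y, hTy, hy⟩ => ⟨y, hTy, hYZ hy⟩)⟩

/-- The outer operator `Ψ P = lfp Φ_P`, bundled with its monotonicity. -/
def PsiHom {β : Type*} (T : β → β → Prop) (R : Set β) : Set β →o Set β :=
  ⟨fun P => OrderHom.lfp (PhiHom T R P),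
   fun _P _P' hPP' => OrderHom.lfp.monotone
     (fun _Y _x hx => hx.imp (fun ⟨hR, y, hT, hy⟩ => ⟨hR, y, hT, hPP' hy⟩) id)⟩

private lemma shift_inf {β : Type*} {R : Set β} {p : ℕ → β}
    (h : ∀ n, ∃ m ≥ n, p m ∈ R) : ∀ n, ∃ m ≥ n, p (m + 1) ∈ R := by
  intro n
  obtain ⟨m, hm, hmR⟩ := h (n + 1)
  exact ⟨m - 1, by omega, by rwa [Nat.sub_add_cancel (by omega)]⟩

private lemma build_path {β : Type*} (T : β → β → Prop) (R G : Set β) (x : β) (hx : x ∈ G)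
    (key : ∀ z ∈ G, ∃ n, ∃ q : ℕ → β, q 0 = z ∧ (∀ i ≤ n, T (q i) (q (i + 1))) ∧
      q n ∈ R ∧ q (n + 1) ∈ G) :
    ∃ p : ℕ → β, p 0 = x ∧ (∀ n, T (p n) (p (n + 1))) ∧ ∀ n, ∃ m ≥ n, p m ∈ R := by
  choose N Q h0 hT hR hGm using key
  let a : ℕ → {z : β // z ∈ G} := fun k =>
    Nat.rec (motive := fun _ => {z : β // z ∈ G}) ⟨x, hx⟩
      (fun _ w => ⟨Q w.1 w.2 (N w.1 w.2 + 1), hGm w.1 w.2⟩) k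
  let c : ℕ → ℕ × ℕ := fun m =>
    Nat.rec (motive := fun _ => ℕ × ℕ) (0, 0)
      (fun _ w => if w.2 = N (a w.1).1 (a w.1).2 then (w.1 + 1, 0) else (w.1, w.2 + 1)) m
  have hcs : ∀ m, c (m + 1) =
      if (c m).2 = N (a (c m).1).1 (a (c m).1).2 then ((c m).1 + 1, 0)
      else ((c m).1, (c m).2 + 1) := fun m => rfl
  have has : ∀ k, (a (k + 1)).1 = Q (a k).1 (a k).2 (N (a k).1 (a k).2 + 1) := fun k => rfl
  have hinv : ∀ m, (c m).2 ≤ N (a (c m).1).1 (a (c m).1).2 := by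
    intro m
    induction m with
    | zero => exact Nat.zero_le _
    | succ m ih =>
      rw [hcs m]
      split
      · exact Nat.zero_le _
      · next h =>
          show (c m).2 + 1 ≤ N (a (c m).1).1 (a (c m).1).2
          have h' : ¬((c m).2 = N (a (c m).1).1 (a (c m).1).2) := h
          omega
  have hreach : ∀ m t, (c m).2 + t ≤ N (a (c m).1).1 (a (c m).1).2 →
      c (m + t) = ((c m).1, (c m).2 + t) := by
    intro m t
    induction t with
    | zero => intro _; simp
    | succ t ih =>
      intro ht
      have h1 := ih (by omega)
      have h2 : c (m + (t + 1)) = c ((m + t) + 1) := by ring_nf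
      rw [h2, hcs (m + t), h1]
      split
      · next h =>
          have h' : (c m).2 + t = N (a (c m).1).1 (a (c m).1).2 := h
          exact absurd h' (by omega)
      · rfl
  refine ⟨fun m => Q (a (c m).1).1 (a (c m).1).2 (c m).2, h0 x hx, ?_, ?_⟩
  · intro m
    by_cases h : (c m).2 = N (a (c m).1).1 (a (c m).1).2
    · have hc : c (m + 1) = ((c m).1 + 1, 0) := by rw [hcs m, if_pos h]
      show T (Q (a (c m).1).1 (a (c m).1).2 (c m).2)
        (Q (a (c (m + 1)).1).1 (a (c (m + 1)).1).2 (c (m + 1)).2)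
      rw [hc]
      show T (Q (a (c m).1).1 (a (c m).1).2 (c m).2)
        (Q (a ((c m).1 + 1)).1 (a ((c m).1 + 1)).2 0)
      rw [h0, has, h]
      exact hT _ _ _ le_rfl
    · have hc : c (m + 1) = ((c m).1, (c m).2 + 1) := by rw [hcs m, if_neg h]
      show T (Q (a (c m).1).1 (a (c m).1).2 (c m).2)
        (Q (a (c (m + 1)).1).1 (a (c (m + 1)).1).2 (c (m + 1)).2)
      rw [hc]
      show T (Q (a (c m).1).1 (a (c m).1).2 (c m).2)
        (Q (a (c m).1).1 (a (c m).1).2 ((c m).2 + 1))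
      exact hT _ _ _ (hinv m)
  · intro n
    refine ⟨n + (N (a (c n).1).1 (a (c n).1).2 - (c n).2), Nat.le_add_right _ _, ?_⟩
    have h1 := hreach n (N (a (c n).1).1 (a (c n).1).2 - (c n).2) (by have := hinv n; omega)
    beta_reduce
    rw [h1]
    show Q (a (c n).1).1 (a (c n).1).2
      ((c n).2 + (N (a (c n).1).1 (a (c n).1).2 - (c n).2)) ∈ R
    rw [show (c n).2 + (N (a (c n).1).1 (a (c n).1).2 - (c n).2)
        = N (a (c n).1).1 (a (c n).1).2 from by have := hinv n; omega]
    exact hR _ _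

theorem gfp_psi_iff_infinitely_often {β : Type*} (T : β → β → Prop) (R : Set β) (x : β) :
    x ∈ OrderHom.gfp (PsiHom T R) ↔
      ∃ p : ℕ → β, p 0 = x ∧ (∀ n, T (p n) (p (n + 1))) ∧
        ∀ n, ∃ m ≥ n, p m ∈ R := by
  set G : Set β := OrderHom.gfp (PsiHom T R) with hGdef
  constructor
  · intro hx
    have hfix : PsiHom T R G = G := OrderHom.map_gfp (PsiHom T R)
    have key : ∀ z ∈ G, ∃ n, ∃ q : ℕ → β, q 0 = z ∧ (∀ i ≤ n, T (q i) (q (i + 1))) ∧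
        q n ∈ R ∧ q (n + 1) ∈ G := by
      have hsub : OrderHom.lfp (PhiHom T R G) ≤
          {z | ∃ n, ∃ q : ℕ → β, q 0 = z ∧ (∀ i ≤ n, T (q i) (q (i + 1))) ∧
            q n ∈ R ∧ q (n + 1) ∈ G} := by
        apply OrderHom.lfp_le
        rintro z (⟨hzR, y, hTy, hyG⟩ | ⟨y, hTy, n, q, hq0, hqT, hqR, hqG⟩)
        · refine ⟨0, fun i => if i = 0 then z else y, by simp, ?_, by simpa, by simp [hyG]⟩
          intro i hi
          interval_cases i
          simpa using hTy
        · refine ⟨n + 1, fun i => if i = 0 then z else q (i - 1), by simp, ?_, ?_, ?_⟩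
          · intro i hi
            match i with
            | 0 => simpa [hq0] using hTy
            | j + 1 => simpa using hqT j (by omega)
          · simpa using hqR
          · simpa using hqG
      intro z hz
      exact hsub (by rw [show OrderHom.lfp (PhiHom T R G) = G from hfix]; exact hz)
    exact build_path T R G x hx key
  · rintro ⟨p, hp0, hpT, hpR⟩
    set S : Set β := {z | ∃ q : ℕ → β, q 0 = z ∧ (∀ n, T (q n) (q (n + 1))) ∧
        ∀ n, ∃ m ≥ n, q m ∈ R} with hSdef
    have hmain : ∀ m (q : ℕ → β), (∀ n, T (q n) (q (n + 1))) → (∀ n, ∃ k ≥ n, q k ∈ R) →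
        q m ∈ R → q 0 ∈ OrderHom.lfp (PhiHom T R S) := by
      intro m
      induction m with
      | zero =>
        intro q hT' hinf hR0
        rw [← OrderHom.map_lfp (PhiHom T R S)]
        exact Or.inl ⟨hR0, q 1, hT' 0,
          ⟨fun i => q (i + 1), rfl, fun n => hT' (n + 1), shift_inf hinf⟩⟩
      | succ m ih =>
        intro q hT' hinf hRm
        rw [← OrderHom.map_lfp (PhiHom T R S)]
        exact Or.inr ⟨q 1, hT' 0,
          ih (fun i => q (i + 1)) (fun n => hT' (n + 1)) (shift_inf hinf) hRm⟩
    have hSle : S ≤ PsiHom T R S := by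
      rintro z ⟨q, hq0, hqT, hqR⟩
      obtain ⟨m, _, hm⟩ := hqR 0
      have h := hmain m q hqT hqR hm
      rw [hq0] at h
      exact h
    exact OrderHom.le_gfp (f := PsiHom T R) hSle ⟨p, hp0, hpT, hpR⟩
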